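/- arXiv:2405.12446 — 4 statements merged into one kernel-verified Lean document; each statement's English description precedes it below -/
import Mathlib

section
/- Let a ∈ ℓ¹_ν with ν > 1, ω > 0, r = ln(ν)/ω, and 0 < σ < r. Define b_n = iωn a_n and ν̃ = e^{ω(r−σ)}. Then ‖b‖_{1,ν̃} ≤ (1/(eσ)) ‖a‖_{1,ν}. -/
lemma cauchy_key_aux (t x : ℝ) (ht : 0 < t) (hx : 0 ≤ x) :
    x * Real.exp (-(t * x)) ≤ 1 / (Real.exp 1 * t) := by
  have h1 : t * x ≤ Real.exp (t * x - 1) := by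
    linarith [Real.add_one_le_exp (t * x - 1)]
  have h3 : (0:ℝ) < Real.exp (-(t * x)) := Real.exp_pos _
  have h4 : t * (x * Real.exp (-(t * x))) ≤ Real.exp (-1) := by
    have := mul_le_mul_of_nonneg_right h1 h3.le
    calc t * (x * Real.exp (-(t * x))) = (t * x) * Real.exp (-(t * x)) := by ring
      _ ≤ Real.exp (t * x - 1) * Real.exp (-(t * x)) := this
      _ = Real.exp (-1) := by rw [← Real.exp_add]; ring_nf
  have h5 : Real.exp (-1) = 1 / Real.exp 1 := by
    rw [Real.exp_neg]; ring
  rw [le_div_iff₀ (by positivity)]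
  calc x * Real.exp (-(t * x)) * (Real.exp 1 * t)
      = (t * (x * Real.exp (-(t * x)))) * Real.exp 1 := by ring
    _ ≤ Real.exp (-1) * Real.exp 1 := by
        exact mul_le_mul_of_nonneg_right h4 (Real.exp_pos 1).le
    _ = 1 := by rw [h5]; field_simp

/-- Cauchy bounds in sequence space: if `a ∈ ℓ¹_ν`, `r = log ν / ω`, `0 < σ < r`,
`b_n = iωn a_n` and `ν̃ = e^{ω(r-σ)}`, then `‖b‖_{1,ν̃} ≤ ‖a‖_{1,ν}/(eσ)`. -/
theorem cauchy_bound_fourier_coefficients (ν ω σ : ℝ) (hν : 1 < ν) (hω : 0 < ω)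
    (hσ : 0 < σ) (hσr : σ < Real.log ν / ω) (a : ℤ → ℂ)
    (ha : Summable fun n : ℤ => ‖a n‖ * ν ^ n.natAbs) :
    Summable (fun n : ℤ =>
      ‖Complex.I * (ω : ℂ) * (n : ℂ) * a n‖ *
        (Real.exp (ω * (Real.log ν / ω - σ))) ^ n.natAbs) ∧
    (∑' n : ℤ, ‖Complex.I * (ω : ℂ) * (n : ℂ) * a n‖ *
        (Real.exp (ω * (Real.log ν / ω - σ))) ^ n.natAbs) ≤
      (1 / (Real.exp 1 * σ)) * ∑' n : ℤ, ‖a n‖ * ν ^ n.natAbs := by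
  have hν0 : (0:ℝ) < ν := lt_trans one_pos hν
  have hνt : Real.exp (ω * (Real.log ν / ω - σ)) = ν * Real.exp (-(ω * σ)) := by
    have : ω * (Real.log ν / ω - σ) = Real.log ν + (-(ω * σ)) := by
      field_simp; ring
    rw [this, Real.exp_add, Real.exp_log hν0]
  have hterm : ∀ n : ℤ,
      ‖Complex.I * (ω : ℂ) * (n : ℂ) * a n‖ *
        (Real.exp (ω * (Real.log ν / ω - σ))) ^ n.natAbs ≤
      (1 / (Real.exp 1 * σ)) * (‖a n‖ * ν ^ n.natAbs) := by
    intro n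
    have habs : ‖Complex.I * (ω : ℂ) * (n : ℂ) * a n‖
        = ω * (n.natAbs : ℝ) * ‖a n‖ := by
      simp only [norm_mul, Complex.norm_I, Complex.norm_real, Real.norm_eq_abs, Complex.norm_intCast,
        one_mul]
      rw [abs_of_pos hω, Nat.cast_natAbs]
      push_cast
      ring
    rw [habs, hνt, mul_pow, ← Real.exp_nat_mul]
    have hkey := cauchy_key_aux σ (ω * (n.natAbs : ℝ)) hσ (by positivity)
    have heq : (n.natAbs : ℝ) * (-(ω * σ)) = -(σ * (ω * (n.natAbs : ℝ))) := by ring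
    rw [heq]
    have h1 : 0 ≤ ‖a n‖ := norm_nonneg _
    have h2 : 0 ≤ (ν:ℝ) ^ n.natAbs := by positivity
    calc ω * (n.natAbs : ℝ) * ‖a n‖ *
          (ν ^ n.natAbs * Real.exp (-(σ * (ω * (n.natAbs : ℝ)))))
        = (ω * (n.natAbs : ℝ) * Real.exp (-(σ * (ω * (n.natAbs : ℝ))))) *
          (‖a n‖ * ν ^ n.natAbs) := by ring
      _ ≤ (1 / (Real.exp 1 * σ)) * (‖a n‖ * ν ^ n.natAbs) := by
          apply mul_le_mul_of_nonneg_right hkey (by positivity)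
  have hsum2 : Summable fun n : ℤ =>
      (1 / (Real.exp 1 * σ)) * (‖a n‖ * ν ^ n.natAbs) := ha.mul_left _
  have hsum1 : Summable (fun n : ℤ =>
      ‖Complex.I * (ω : ℂ) * (n : ℂ) * a n‖ *
        (Real.exp (ω * (Real.log ν / ω - σ))) ^ n.natAbs) := by
    apply Summable.of_nonneg_of_le (fun n => by positivity) hterm hsum2
  refine ⟨hsum1, ?_⟩
  calc (∑' n : ℤ, ‖Complex.I * (ω : ℂ) * (n : ℂ) * a n‖ *
        (Real.exp (ω * (Real.log ν / ω - σ))) ^ n.natAbs)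
      ≤ ∑' n : ℤ, (1 / (Real.exp 1 * σ)) * (‖a n‖ * ν ^ n.natAbs) :=
        Summable.tsum_le_tsum hterm hsum1 hsum2
    _ = (1 / (Real.exp 1 * σ)) * ∑' n : ℤ, ‖a n‖ * ν ^ n.natAbs :=
        tsum_mul_left
end

section
/- Let f(z) = Σ_{n∈ℤ} a_n e^{iωnz} with a ∈ ℓ¹_ν, ν > 1, ω > 0, r = ln(ν)/ω, and 0 < σ < r. Then the derivative f′ satisfies sup_{z : |Im z| < r−σ} |f′(z)| ≤ (1/(eσ)) ‖a‖_{1,ν}. -/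
-- elementary inequality: x * exp (-(σ*x)) ≤ 1/(e*σ) for x ≥ 0
lemma aux_xexp (σ : ℝ) (hσ : 0 < σ) (x : ℝ) (hx : 0 ≤ x) :
    x * Real.exp (-(σ * x)) ≤ 1 / (Real.exp 1 * σ) := by
  have ht : σ * x ≤ Real.exp (σ * x - 1) := by
    have := Real.add_one_le_exp (σ * x - 1)
    linarith
  have h1 : σ * x * Real.exp (-(σ * x)) ≤ Real.exp (-1 : ℝ) := by
    calc σ * x * Real.exp (-(σ * x)) ≤ Real.exp (σ * x - 1) * Real.exp (-(σ * x)) := by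
          apply mul_le_mul_of_nonneg_right ht (Real.exp_nonneg _)
      _ = Real.exp (-1 : ℝ) := by rw [← Real.exp_add]; ring_nf
  have he : Real.exp (-1 : ℝ) = 1 / Real.exp 1 := by
    rw [Real.exp_neg]; ring
  rw [he, le_div_iff₀ (Real.exp_pos 1)] at h1
  rw [le_div_iff₀ (by positivity : (0:ℝ) < Real.exp 1 * σ)]
  nlinarith [Real.exp_pos (1:ℝ)]

/-- Cauchy bound for the derivative of an analytic Fourier series: giving up `σ` of the
width of the strip of analyticity yields the uniform derivative bound `‖a‖_{1,ν}/(eσ)`. -/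
theorem fourier_series_derivative_bound (ν ω σ : ℝ) (hν : 1 < ν) (hω : 0 < ω)
    (hσ : 0 < σ) (hσr : σ < Real.log ν / ω) (a : ℤ → ℂ)
    (ha : Summable fun n : ℤ => ‖a n‖ * ν ^ n.natAbs) :
    ∀ z : ℂ, |z.im| < Real.log ν / ω - σ →
      ‖(deriv (fun w : ℂ => ∑' n : ℤ, a n * Complex.exp (Complex.I * (ω : ℂ) * (n : ℂ) * w)) z)‖ ≤
      (1 / (Real.exp 1 * σ)) * ∑' n : ℤ, ‖a n‖ * ν ^ n.natAbs := by
  intro z hz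
  set r : ℝ := Real.log ν / ω with hr
  have hrσ : 0 < r - σ := by linarith
  set t : Set ℂ := {w : ℂ | |w.im| < r - σ} with ht
  have htopen : IsOpen t := by
    have : t = Complex.im ⁻¹' (Set.Ioo (-(r - σ)) (r - σ)) := by
      ext w; simp [ht, abs_lt, and_comm]
    rw [this]
    exact isOpen_Ioo.preimage Complex.continuous_im
  have htconv : Convex ℝ t := by
    have : t = Complex.imLm ⁻¹' (Set.Ioo (-(r - σ)) (r - σ)) := by
      ext w; simp [ht, abs_lt, and_comm, Complex.imLm]
    rw [this]
    exact (convex_Ioo _ _).linear_preimage _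
  have htpre : IsPreconnected t := htconv.isPreconnected
  set u : ℤ → ℝ := fun n => ‖a n‖ * ν ^ n.natAbs / (Real.exp 1 * σ) with hu
  have hus : Summable u := ha.div_const _
  set g : ℤ → ℂ → ℂ := fun n w => a n * Complex.exp (Complex.I * (ω : ℂ) * (n : ℂ) * w) with hg
  set g' : ℤ → ℂ → ℂ := fun n w =>
    a n * (Complex.exp (Complex.I * (ω : ℂ) * (n : ℂ) * w) * (Complex.I * (ω : ℂ) * (n : ℂ)))
    with hg'
  have hderiv : ∀ n : ℤ, ∀ w : ℂ, HasDerivAt (g n) (g' n w) w := by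
    intro n w
    have h1 : HasDerivAt (fun w : ℂ => Complex.I * (ω : ℂ) * (n : ℂ) * w)
        (Complex.I * (ω : ℂ) * (n : ℂ)) w := by
      simpa using (hasDerivAt_id w).const_mul (Complex.I * (ω : ℂ) * (n : ℂ))
    exact (h1.cexp).const_mul (a n)
  have hnormc : ∀ n : ℤ, ‖Complex.I * (ω : ℂ) * (n : ℂ)‖ = ω * (n.natAbs : ℝ) := by
    intro n
    rw [norm_mul, norm_mul, Complex.norm_I, Complex.norm_real, Real.norm_eq_abs, abs_of_pos hω, one_mul,
      Complex.norm_intCast, Nat.cast_natAbs, Int.cast_abs]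
  have hexpbound : ∀ n : ℤ, ∀ w : ℂ, w ∈ t →
      ‖Complex.exp (Complex.I * (ω : ℂ) * (n : ℂ) * w)‖
        ≤ Real.exp (ω * (n.natAbs : ℝ) * (r - σ)) := by
    intro n w hw
    rw [Complex.norm_exp]
    apply Real.exp_le_exp.2
    have hre : (Complex.I * (ω : ℂ) * (n : ℂ) * w).re = -(ω * (n : ℝ) * w.im) := by
      simp [Complex.mul_re, Complex.mul_im]
      try ring
    rw [hre]
    have h1 : -(ω * (n : ℝ) * w.im) ≤ |ω * (n : ℝ) * w.im| := neg_le_abs _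
    have h2 : |ω * (n : ℝ) * w.im| = ω * (n.natAbs : ℝ) * |w.im| := by
      rw [abs_mul, abs_mul, abs_of_pos hω, Nat.cast_natAbs]
      simp
    calc -(ω * (n : ℝ) * w.im) ≤ ω * (n.natAbs : ℝ) * |w.im| := by rw [← h2]; exact h1
      _ ≤ ω * (n.natAbs : ℝ) * (r - σ) := by
          apply mul_le_mul_of_nonneg_left (le_of_lt hw)
          positivity
  have hbound : ∀ n : ℤ, ∀ w : ℂ, w ∈ t → ‖g' n w‖ ≤ u n := by
    intro n w hw
    have : ‖g' n w‖ = ‖a n‖ *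
        (‖Complex.exp (Complex.I * (ω : ℂ) * (n : ℂ) * w)‖ *
          (ω * (n.natAbs : ℝ))) := by
      simp only [hg', norm_mul, hnormc]
    rw [this, hu]
    have hnu : Real.exp (ω * (n.natAbs : ℝ) * r) = ν ^ n.natAbs := by
      have : ω * (n.natAbs : ℝ) * r = (n.natAbs : ℝ) * Real.log ν := by
        rw [hr, mul_div_assoc', div_eq_iff hω.ne']
        ring
      rw [this, Real.exp_nat_mul, Real.exp_log (by linarith)]
    have key : ‖Complex.exp (Complex.I * (ω : ℂ) * (n : ℂ) * w)‖ *
        (ω * (n.natAbs : ℝ)) ≤ ν ^ n.natAbs / (Real.exp 1 * σ) := by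
      have h1 := hexpbound n w hw
      have hx : (0:ℝ) ≤ ω * (n.natAbs : ℝ) := by positivity
      calc ‖Complex.exp (Complex.I * (ω : ℂ) * (n : ℂ) * w)‖ * (ω * (n.natAbs : ℝ))
          ≤ Real.exp (ω * (n.natAbs : ℝ) * (r - σ)) * (ω * (n.natAbs : ℝ)) := by
            apply mul_le_mul_of_nonneg_right h1 hx
        _ = Real.exp (ω * (n.natAbs : ℝ) * r) *
              ((ω * (n.natAbs : ℝ)) * Real.exp (-(σ * (ω * (n.natAbs : ℝ))))) := by
            rw [show ω * (n.natAbs : ℝ) * (r - σ)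
                = ω * (n.natAbs : ℝ) * r + -(σ * (ω * (n.natAbs : ℝ))) by ring, Real.exp_add]
            ring
        _ ≤ Real.exp (ω * (n.natAbs : ℝ) * r) * (1 / (Real.exp 1 * σ)) := by
            apply mul_le_mul_of_nonneg_left (aux_xexp σ hσ _ hx) (Real.exp_nonneg _)
        _ = ν ^ n.natAbs / (Real.exp 1 * σ) := by rw [hnu]; ring
    calc ‖a n‖ *
        (‖Complex.exp (Complex.I * (ω : ℂ) * (n : ℂ) * w)‖ * (ω * (n.natAbs : ℝ)))
        ≤ ‖a n‖ * (ν ^ n.natAbs / (Real.exp 1 * σ)) := by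
          apply mul_le_mul_of_nonneg_left key (norm_nonneg _)
      _ = ‖a n‖ * ν ^ n.natAbs / (Real.exp 1 * σ) := by ring
  have h0t : (0 : ℂ) ∈ t := by simp [ht]; linarith
  have hg0 : Summable fun n => g n 0 := by
    apply Summable.of_norm
    apply Summable.of_nonneg_of_le (fun n => norm_nonneg _) _ ha
    intro n
    have : ‖g n 0‖ = ‖a n‖ := by simp [hg]
    rw [this]
    have h1 : (1:ℝ) ≤ ν ^ n.natAbs := one_le_pow₀ (le_of_lt hν)
    nlinarith [norm_nonneg (a n)]
  have hzt : z ∈ t := hz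
  have hd : HasDerivAt (fun w : ℂ => ∑' n : ℤ, g n w) (∑' n : ℤ, g' n z) z :=
    hasDerivAt_tsum_of_isPreconnected hus htopen htpre
      (fun n y hy => hderiv n y) hbound h0t hg0 hzt
  rw [hd.deriv]
  have hsum' : Summable fun n : ℤ => ‖g' n z‖ :=
    Summable.of_nonneg_of_le (fun n => norm_nonneg _) (fun n => hbound n z hzt) hus
  calc ‖∑' n : ℤ, g' n z‖ ≤ ∑' n : ℤ, ‖g' n z‖ := norm_tsum_le_tsum_norm hsum'
    _ ≤ ∑' n : ℤ, u n := Summable.tsum_le_tsum (fun n => hbound n z hzt) hsum' hus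
    _ = (1 / (Real.exp 1 * σ)) * ∑' n : ℤ, ‖a n‖ * ν ^ n.natAbs := by
        rw [hu]
        rw [tsum_div_const]
        ring
end

section
/- Let f, λ (real, negative), and P be as in the invariance equation ∂_θ P(θ,σ) + λσ ∂_σ P(θ,σ) = f(P(θ,σ)), with P continuous on ℝ × [−τ,τ] and T-periodic in θ. Then γ(θ) = P(θ,0) is a T-periodic solution of γ′ = f(γ), and for each σ ∈ [−τ,τ], θ ∈ ℝ, one has ‖P(t+θ, σe^{λt}) − γ(t+θ)‖ → 0 as t → ∞. -/
/-- The equator of the parameterized cylinder is a `T`-periodic orbit, and every whisker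
accumulates on it: `‖P(t+θ, σe^{λt}) − γ(t+θ)‖ → 0` as `t → ∞`, where `γ(θ) = P(θ,0)`. -/
theorem parameterization_whisker_accumulates {d : ℕ} (U : Set (Fin d → ℝ)) (hU : IsOpen U)
    (f : (Fin d → ℝ) → (Fin d → ℝ)) (hf : ContDiffOn ℝ 1 f U)
    (lam : ℝ) (hlam : lam < 0) (T τ : ℝ) (hT : 0 < T) (hτ : 0 < τ)
    (P : ℝ → ℝ → (Fin d → ℝ))
    (hP : ContDiff ℝ 1 (fun p : ℝ × ℝ => P p.1 p.2))
    (hPU : ∀ θ : ℝ, ∀ σ ∈ Set.Icc (-τ) τ, P θ σ ∈ U)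
    (hper : ∀ θ σ : ℝ, P (θ + T) σ = P θ σ)
    (hinv : ∀ θ : ℝ, ∀ σ ∈ Set.Icc (-τ) τ,
      deriv (fun t => P t σ) θ + (lam * σ) • deriv (fun s => P θ s) σ = f (P θ σ)) :
    (∀ θ : ℝ, HasDerivAt (fun t : ℝ => P t 0) (f (P θ 0)) θ) ∧
    (∀ θ : ℝ, P (θ + T) 0 = P θ 0) ∧
    (∀ σ ∈ Set.Icc (-τ) τ, ∀ θ : ℝ,
      Filter.Tendsto (fun t : ℝ => ‖P (t + θ) (σ * Real.exp (lam * t)) - P (t + θ) 0‖)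
        Filter.atTop (nhds 0)) := by
  -- differentiability of t ↦ P t 0
  have hdiff : ∀ θ : ℝ, DifferentiableAt ℝ (fun t : ℝ => P t 0) θ := by
    intro θ
    have : DifferentiableAt ℝ (fun p : ℝ × ℝ => P p.1 p.2) (θ, 0) :=
      (hP.differentiable one_ne_zero).differentiableAt
    exact this.comp θ (differentiableAt_id.prodMk (differentiableAt_const (0:ℝ)) :
      DifferentiableAt ℝ (fun t : ℝ => (t, (0:ℝ))) θ)
  refine ⟨?_, fun θ => hper θ 0, ?_⟩
  · intro θ
    have h0 : (0:ℝ) ∈ Set.Icc (-τ) τ := ⟨by linarith, by linarith⟩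
    have := hinv θ 0 h0
    rw [mul_zero, zero_smul, add_zero] at this
    rw [← this]
    exact (hdiff θ).hasDerivAt
  · intro σ hσ θ
    -- periodicity in θ for each σ
    have hperi : ∀ s : ℝ, Function.Periodic (fun t => P t s) T := fun s t => hper t s
    have hred : ∀ (a s : ℝ), P a s = P (a - ⌊a / T⌋ * T) s := by
      intro a s
      exact ((hperi s).sub_int_mul_eq (⌊a / T⌋)).symm
    -- uniform continuity on compact set
    have hK : IsCompact ((Set.Icc (0:ℝ) T) ×ˢ (Set.Icc (-τ) τ)) :=
      (isCompact_Icc).prod isCompact_Icc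
    have huc : UniformContinuousOn (fun p : ℝ × ℝ => P p.1 p.2)
        ((Set.Icc (0:ℝ) T) ×ˢ (Set.Icc (-τ) τ)) :=
      hK.uniformContinuousOn_of_continuous hP.continuous.continuousOn
    rw [Metric.uniformContinuousOn_iff] at huc
    -- σ e^{λt} → 0
    have hexp : Filter.Tendsto (fun t : ℝ => σ * Real.exp (lam * t)) Filter.atTop (nhds 0) := by
      have h1 : Filter.Tendsto (fun t : ℝ => lam * t) Filter.atTop Filter.atBot :=
        Filter.Tendsto.const_mul_atTop_of_neg hlam Filter.tendsto_id
      have h2 := Real.tendsto_exp_atBot.comp h1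
      simpa using h2.const_mul σ
    rw [Metric.tendsto_atTop]
    intro ε hε
    obtain ⟨δ, hδ, hδ'⟩ := huc ε hε
    have hmin : 0 < min δ τ := lt_min hδ hτ
    have := (Metric.tendsto_atTop.mp hexp) (min δ τ) hmin
    obtain ⟨N, hN⟩ := this
    refine ⟨N, fun t ht => ?_⟩
    set s := σ * Real.exp (lam * t) with hs
    have hsmall : |s| < min δ τ := by
      have h := hN t ht
      rwa [Real.dist_eq, sub_zero] at h
    set a := t + θ with ha
    set a' := a - ⌊a / T⌋ * T with ha'
    have ha'mem : a' ∈ Set.Icc (0:ℝ) T :=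
      ⟨Int.sub_floor_div_mul_nonneg a hT, (Int.sub_floor_div_mul_lt a hT).le⟩
    have hsmem : s ∈ Set.Icc (-τ) τ := by
      have h1 := abs_lt.mp hsmall
      have h2 : min δ τ ≤ τ := min_le_right _ _
      exact ⟨by linarith [h1.1], by linarith [h1.2]⟩
    have hx : ((a', s) : ℝ × ℝ) ∈ (Set.Icc (0:ℝ) T) ×ˢ (Set.Icc (-τ) τ) := ⟨ha'mem, hsmem⟩
    have hy : ((a', 0) : ℝ × ℝ) ∈ (Set.Icc (0:ℝ) T) ×ˢ (Set.Icc (-τ) τ) :=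
      ⟨ha'mem, by simp; linarith⟩
    have hdxy : dist ((a', s) : ℝ × ℝ) ((a', 0) : ℝ × ℝ) < δ := by
      rw [Prod.dist_eq]
      simp [Real.dist_eq]
      exact lt_of_lt_of_le hsmall (min_le_left _ _)
    have := hδ' _ hx _ hy hdxy
    simp only [dist_eq_norm] at this ⊢
    rw [hred a s, hred a 0]
    simpa using this
end

section
/- Consider the polynomial embedded Hill system x′=p, y′=q, p′=λ₂x+2q−xz³, q′=λ₁y−2p−yz³, z′=−z³(xp+yq) on ℝ⁵. If (x,y,p,q,z) is a solution with (x(0)²+y(0)²)·z(0)² = 1, z(0) > 0, and (x(t),y(t)) ≠ (0,0) for all t in the interval of existence, then (x(t)²+y(t)²)·z(t)² = 1 for all t; consequently z(t) = (x(t)²+y(t)²)^{−1/2}, and (x,y,p,q) solves the original Hill restricted four body problem x′=p, y′=q, p′=λ₂x+2q−x(x²+y²)^{−3/2}, q′=λ₁y−2p−y(x²+y²)^{−3/2}. -/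
private lemma const_on_Icc_aux {f : ℝ → ℝ} {a b : ℝ} (hab : a ≤ b)
    (hf : ∀ t ∈ Set.Icc a b, HasDerivAt f 0 t) : f b = f a := by
  have h := constant_of_has_deriv_right_zero (f := f) (a := a) (b := b)
    (fun t ht => (hf t ht).continuousAt.continuousWithinAt)
    (fun t ht => (hf t (Set.mem_Icc_of_Ico ht)).hasDerivWithinAt)
  exact h b (Set.right_mem_Icc.mpr hab)

private lemma const_on_ordConn {I : Set ℝ} (hIconn : I.OrdConnected)
    (hI0 : (0 : ℝ) ∈ I) {f : ℝ → ℝ}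
    (hf : ∀ t ∈ I, HasDerivAt f 0 t) : ∀ t ∈ I, f t = f 0 := by
  intro t ht
  rcases le_total 0 t with h | h
  · exact const_on_Icc_aux h (fun s hs => hf s (hIconn.out hI0 ht hs))
  · exact (const_on_Icc_aux h (fun s hs => hf s (hIconn.out ht hI0 hs))).symm

/-- The constraint `(x²+y²)z² = 1` is preserved along orbits of the polynomial embedded
Hill system avoiding collision, so that `z = (x²+y²)^{-1/2}` and `(x,y,p,q)` solves the
original Hill restricted four body problem. -/
theorem polynomial_embedding_hill (lam1 lam2 : ℝ) (I : Set ℝ) (hIopen : IsOpen I)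
    (hIconn : I.OrdConnected) (hI0 : (0 : ℝ) ∈ I)
    (x y p q z : ℝ → ℝ)
    (hx : ∀ t ∈ I, HasDerivAt x (p t) t)
    (hy : ∀ t ∈ I, HasDerivAt y (q t) t)
    (hp : ∀ t ∈ I, HasDerivAt p (lam2 * x t + 2 * q t - x t * z t ^ 3) t)
    (hq : ∀ t ∈ I, HasDerivAt q (lam1 * y t - 2 * p t - y t * z t ^ 3) t)
    (hz : ∀ t ∈ I, HasDerivAt z (-(z t ^ 3) * (x t * p t + y t * q t)) t)
    (h0 : (x 0 ^ 2 + y 0 ^ 2) * z 0 ^ 2 = 1) (hz0 : 0 < z 0)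
    (hne : ∀ t ∈ I, (x t, y t) ≠ (0, 0)) :
    ∀ t ∈ I,
      (x t ^ 2 + y t ^ 2) * z t ^ 2 = 1 ∧
      z t = (x t ^ 2 + y t ^ 2) ^ (-(1 : ℝ) / 2) ∧
      HasDerivAt x (p t) t ∧
      HasDerivAt y (q t) t ∧
      HasDerivAt p
        (lam2 * x t + 2 * q t - x t * (x t ^ 2 + y t ^ 2) ^ (-(3 : ℝ) / 2)) t ∧
      HasDerivAt q
        (lam1 * y t - 2 * p t - y t * (x t ^ 2 + y t ^ 2) ^ (-(3 : ℝ) / 2)) t := by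
  -- continuity on I
  have hxc : ContinuousOn x I := fun t ht => (hx t ht).continuousAt.continuousWithinAt
  have hyc : ContinuousOn y I := fun t ht => (hy t ht).continuousAt.continuousWithinAt
  have hpc : ContinuousOn p I := fun t ht => (hp t ht).continuousAt.continuousWithinAt
  have hqc : ContinuousOn q I := fun t ht => (hq t ht).continuousAt.continuousWithinAt
  have hzc : ContinuousOn z I := fun t ht => (hz t ht).continuousAt.continuousWithinAt
  set c : ℝ → ℝ := fun t => -(z t ^ 2) * (x t * p t + y t * q t) with hc
  have hccont : ContinuousOn c I := by
    exact (((hzc.pow 2).neg).mul ((hxc.mul hpc).add (hyc.mul hqc)))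
  set C : ℝ → ℝ := fun t => ∫ s in (0:ℝ)..t, c s with hCdef
  have hCderiv : ∀ t ∈ I, HasDerivAt C (c t) t := by
    intro t ht
    have hsub : Set.uIcc (0:ℝ) t ⊆ I := hIconn.uIcc_subset hI0 ht
    exact intervalIntegral.integral_hasDerivAt_right
      ((hccont.mono hsub).intervalIntegrable)
      (hccont.stronglyMeasurableAtFilter hIopen t ht)
      (hccont.continuousAt (hIopen.mem_nhds ht))
  -- z t = z 0 * exp (C t)
  have hzeq : ∀ t ∈ I, z t = z 0 * Real.exp (C t) := by
    have hderiv : ∀ t ∈ I, HasDerivAt (fun s => z s * Real.exp (-C s)) 0 t := by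
      intro t ht
      have h1 := (hz t ht).mul (((hCderiv t ht).neg).exp)
      refine h1.congr_deriv ?_
      simp only [hc]
      ring
    intro t ht
    have h2 : z t * Real.exp (-C t) = z 0 * Real.exp (-C 0) :=
      const_on_ordConn hIconn hI0 hderiv t ht
    have hC0 : C 0 = 0 := by simp [hCdef]
    rw [hC0] at h2
    simp only [neg_zero, Real.exp_zero, mul_one] at h2
    have hstep : z t = z t * Real.exp (-C t) * Real.exp (C t) := by
      rw [mul_assoc, ← Real.exp_add]; simp
    rw [hstep, h2]
  have hzpos : ∀ t ∈ I, 0 < z t := by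
    intro t ht
    rw [hzeq t ht]
    exact mul_pos hz0 (Real.exp_pos _)
  -- u := r - (z^2)⁻¹ is constant 0
  have hueq : ∀ t ∈ I, (x t ^ 2 + y t ^ 2) = (z t ^ 2)⁻¹ := by
    have hderiv : ∀ t ∈ I,
        HasDerivAt (fun s => x s ^ 2 + y s ^ 2 - (z s ^ 2)⁻¹) 0 t := by
      intro t ht
      have hzne : z t ^ 2 ≠ 0 := pow_ne_zero 2 (hzpos t ht).ne'
      have h1 := (((hx t ht).pow 2).add ((hy t ht).pow 2)).sub
        (((hz t ht).pow 2).inv hzne)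
      refine h1.congr_deriv ?_
      have hztne : z t ≠ 0 := (hzpos t ht).ne'
      simp only [Pi.pow_apply]
      field_simp
      ring
    intro t ht
    have h2 : x t ^ 2 + y t ^ 2 - (z t ^ 2)⁻¹ = x 0 ^ 2 + y 0 ^ 2 - (z 0 ^ 2)⁻¹ :=
      const_on_ordConn hIconn hI0 hderiv t ht
    have h00 : (x 0 ^ 2 + y 0 ^ 2) = (z 0 ^ 2)⁻¹ := by
      have hz0ne : z 0 ^ 2 ≠ 0 := by positivity
      field_simp
      linarith [h0]
    linarith [h2, h00]
  intro t ht
  have hzt := hzpos t ht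
  have hr : (x t ^ 2 + y t ^ 2) * z t ^ 2 = 1 := by
    have hzne : z t ^ 2 ≠ 0 := pow_ne_zero 2 hzt.ne'
    rw [hueq t ht]
    field_simp
  have hrpos : 0 < x t ^ 2 + y t ^ 2 := by
    rw [hueq t ht]; positivity
  set r : ℝ := x t ^ 2 + y t ^ 2 with hrdef
  have hzform : z t = r ^ (-(1 : ℝ) / 2) := by
    have hzsq : z t ^ 2 = r⁻¹ := by
      rw [hrdef, hueq t ht, inv_inv]
    have : z t = Real.sqrt (z t ^ 2) := (Real.sqrt_sq hzt.le).symm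
    rw [this, hzsq, ← Real.rpow_neg_one r, Real.sqrt_eq_rpow,
      ← Real.rpow_mul hrpos.le]
    congr 1
    norm_num
  have hz3 : z t ^ 3 = r ^ (-(3 : ℝ) / 2) := by
    rw [hzform, ← Real.rpow_natCast (r ^ (-(1:ℝ)/2)) 3, ← Real.rpow_mul hrpos.le]
    congr 1
    norm_num
  refine ⟨hr, hzform, hx t ht, hy t ht, ?_, ?_⟩
  · have := hp t ht; rwa [hz3] at this
  · have := hq t ht; rwa [hz3] at this
end
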